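/- Let k > 0 and define the quadratic polynomial y(t) = k + (k−3)·t + ((k−3)/(2k))·t². Then the residual function F(t) = −(y'(t)·t − y(t))·(y(t) − k·t − k + 4t) + y(t)·(y(t) − k·t − k + 2t) vanishes to third order at t = 0: its value and its first and second derivatives at t = 0 are all zero, so that F(t)/t³ is bounded as t → 0⁺. In other words, the coefficients C₀ = k, C₁ = k−3, C₂ = (k−3)/(2k) solve the reparametrized mode equation through order t². -/

import Mathlib

/-- The quadratic approximation `y(t) = C₀ + C₁ t + C₂ t²` with
`C₀ = k`, `C₁ = k - 3`, `C₂ = (k - 3)/(2k)`. -/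
noncomputable def yApprox (k : ℝ) : ℝ → ℝ :=
  fun t => k + (k - 3) * t + (k - 3) / (2 * k) * t ^ 2

/-- The residual of the reparametrized mode equation for `yApprox k`. -/
noncomputable def resF (k : ℝ) : ℝ → ℝ :=
  fun t =>
    -(deriv (yApprox k) t * t - yApprox k t) * (yApprox k t - k * t - k + 4 * t) +
      yApprox k t * (yApprox k t - k * t - k + 2 * t)

lemma deriv_yApprox (k t : ℝ) :
    deriv (yApprox k) t = (k - 3) + (k - 3) / (2 * k) * (2 * t) := by
  have h : HasDerivAt (yApprox k) ((k - 3) + (k - 3) / (2 * k) * (2 * t)) t := by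
    unfold yApprox
    have h1 : HasDerivAt (fun t : ℝ => k + (k - 3) * t) (0 + (k - 3) * 1) t :=
      (hasDerivAt_const t k).add ((hasDerivAt_id t).const_mul (k - 3))
    have h2 : HasDerivAt (fun t : ℝ => (k - 3) / (2 * k) * t ^ 2)
        ((k - 3) / (2 * k) * (2 * t ^ 1)) t :=
      (hasDerivAt_pow 2 t).const_mul ((k - 3) / (2 * k))
    have : HasDerivAt (fun t : ℝ => k + (k - 3) * t + (k - 3) / (2 * k) * t ^ 2) _ t :=
      h1.add h2
    convert this using 1
    ring
  exact h.deriv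

lemma resF_eq (k : ℝ) (hk : k ≠ 0) :
    resF k = fun t => (k - 3) * (k - 5) / (2 * k) * t ^ 3 := by
  funext t
  simp only [resF, deriv_yApprox, yApprox]
  field_simp
  ring

theorem stmt_5 (k : ℝ) (hk : 0 < k) :
    resF k 0 = 0 ∧ deriv (resF k) 0 = 0 ∧ deriv (deriv (resF k)) 0 = 0 ∧
      ∃ C : ℝ, ∀ᶠ t in nhdsWithin (0 : ℝ) (Set.Ioi 0), |resF k t / t ^ 3| ≤ C := by
  have hne : k ≠ 0 := hk.ne'
  set A : ℝ := (k - 3) * (k - 5) / (2 * k) with hA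
  have hres : resF k = fun t => A * t ^ 3 := resF_eq k hne
  have hd1 : deriv (resF k) = fun t => A * (3 * t ^ 2) := by
    rw [hres]; funext t
    simp [deriv_const_mul, mul_comm]
  have hd2 : deriv (deriv (resF k)) = fun t => A * 3 * (2 * t) := by
    rw [hd1]; funext t
    have : (fun t : ℝ => A * (3 * t ^ 2)) = fun t => A * 3 * t ^ 2 := by
      funext t; ring
    rw [this]
    simp [deriv_const_mul]
  refine ⟨by rw [hres]; simp, by rw [hd1]; simp, by rw [hd2]; simp, ⟨|A|, ?_⟩⟩
  filter_upwards [self_mem_nhdsWithin] with t ht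
  have ht0 : (t : ℝ) ≠ 0 := ne_of_gt ht
  rw [hres]
  rw [mul_div_assoc, div_self (pow_ne_zero 3 ht0), mul_one]
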